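/- Let k, θ > 0 and let {Y(t,n)} for (t,n) ∈ ℤ_{≥0}×ℕ be i.i.d. random variables with Gamma(k,θ) distribution. Define Z(0,n) = 1 if n=1 and 0 otherwise, Z(t,0)=0, and Z(t+1,n) = Y(t,n) Z(t,n) + Z(t,n-1). For integers n₁ ≥ n₂ ≥ … ≥ n_K ≥ 1, set u(t, n⃗) = E[ Π_{i=1}^{K} Z(t, n_i) ] (which is finite). Suppose the coordinates of n⃗ are constant on L consecutive blocks of sizes c₁,…,c_L and strictly decreasing from each block to the next. Then u(t+1, n⃗) = Σ_{A ⊆ {1,…,K}} ( Π_{i=1}^{L} m_{c_i^A} ) · u(t, n⃗^A), where c_i^A is the number of elements of A lying in the i-th block, n⃗^A is obtained from n⃗ by decreasing by 1 each coordinate in the last c_i - c_i^A positions of the i-th block (for every i), and m_j = θ^j Π_{l=0}^{j-1}(k+l) with m₀ = 1. -/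

import Mathlib

open MeasureTheory ProbabilityTheory
open scoped ENNReal NNReal

/-- The `j`-th moment `m_j = θ^j ∏_{l=0}^{j-1} (k+l)` of the Gamma(k,θ) distribution. -/
noncomputable def gammaMoment (k θ : ℝ) (j : ℕ) : ℝ :=
  θ ^ j * ∏ l ∈ Finset.range j, (k + l)

/-- `n⃗^A`: within each block of equal coordinates of the weakly decreasing vector `n⃗`,
the first `c_i^A = #(A ∩ block)` coordinates are kept and the remaining (last) ones
are decreased by `1`. -/
def vecA {K : ℕ} (n : Fin K → ℕ) (A : Finset (Fin K)) (i : Fin K) : ℕ :=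
  if (Finset.univ.filter (fun j : Fin K => n j = n i ∧ j < i)).card <
      (A.filter (fun j => n j = n i)).card
  then n i else n i - 1

lemma Gamma_add_nat (k : ℝ) (hk : 0 < k) (c : ℕ) :
    Real.Gamma (k + c) = (∏ l ∈ Finset.range c, (k + l)) * Real.Gamma k := by
  induction c with
  | zero => simp
  | succ c ih =>
    have h : k + (c + 1 : ℕ) = (k + c) + 1 := by push_cast; ring
    rw [h, Real.Gamma_add_one (by positivity), ih, Finset.prod_range_succ]
    push_cast
    ring

lemma integrable_gammaPDFReal {a r : ℝ} (ha : 0 < a) (hr : 0 < r) :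
    Integrable (gammaPDFReal a r) := by
  refine ⟨(measurable_gammaPDFReal a r).aestronglyMeasurable, ?_⟩
  have h : ∀ x, (‖gammaPDFReal a r x‖₊ : ℝ≥0∞) = gammaPDF a r x := by
    intro x
    rw [gammaPDF, ← Real.enorm_eq_ofReal (gammaPDFReal_nonneg ha hr x)]
    rfl
  show (∫⁻ x, (‖gammaPDFReal a r x‖₊ : ℝ≥0∞)) < ⊤
  simp_rw [h, lintegral_gammaPDF_eq_one ha hr]
  exact ENNReal.one_lt_top

lemma integral_gammaPDFReal_eq_one {a r : ℝ} (ha : 0 < a) (hr : 0 < r) :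
    ∫ x, gammaPDFReal a r x = 1 := by
  rw [integral_eq_lintegral_of_nonneg_ae (ae_of_all _ (gammaPDFReal_nonneg ha hr))
    (measurable_gammaPDFReal a r).aestronglyMeasurable]
  have h : ∀ x, ENNReal.ofReal (gammaPDFReal a r x) = gammaPDF a r x := fun _ => rfl
  simp_rw [h, lintegral_gammaPDF_eq_one ha hr]
  simp

lemma pdf_moment_identity {k θ : ℝ} (hk : 0 < k) (hθ : 0 < θ) (c : ℕ) {x : ℝ} (hx : x ≠ 0) :
    x ^ c * gammaPDFReal k (1/θ) x =
      gammaMoment k θ c * gammaPDFReal (k + c) (1/θ) x := by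
  set r : ℝ := 1/θ with hr'
  have hr : 0 < r := by positivity
  rcases lt_or_gt_of_ne hx with hneg | hpos
  · rw [gammaPDFReal, gammaPDFReal, if_neg (not_le.mpr hneg), if_neg (not_le.mpr hneg)]
    ring
  · rw [gammaPDFReal, gammaPDFReal, if_pos hpos.le, if_pos hpos.le]
    rw [Gamma_add_nat k hk c]
    have h1 : x ^ (k + c - 1 : ℝ) = x ^ (k - 1 : ℝ) * x ^ (c : ℕ) := by
      rw [← Real.rpow_natCast x c, ← Real.rpow_add hpos]
      ring_nf
    have h2 : r ^ (k + c : ℝ) = r ^ (k : ℝ) * r ^ (c : ℕ) := by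
      rw [← Real.rpow_natCast r c, ← Real.rpow_add hr]
    have h3 : (θ : ℝ) ^ c * r ^ (c : ℕ) = 1 := by
      rw [hr', one_div, inv_pow, mul_inv_cancel₀ (by positivity)]
    have hΓ : Real.Gamma k ≠ 0 := (Real.Gamma_pos_of_pos hk).ne'
    have hprod : (0:ℝ) < ∏ l ∈ Finset.range c, (k + l) := by
      apply Finset.prod_pos; intro l _; positivity
    have h4 : θ ^ c * θ⁻¹ ^ c = 1 := by
      rw [← mul_pow, mul_inv_cancel₀ hθ.ne', one_pow]
    rw [gammaMoment, h1, h2]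
    set E := Real.exp (-(r * x))
    set X := x ^ (k - 1 : ℝ)
    set R := r ^ (k : ℝ)
    set PR := ∏ l ∈ Finset.range c, (k + (l:ℝ)) with hPR
    set G := Real.Gamma k
    field_simp [inv_pow]
    linear_combination (-(PR * R * X * x ^ c * E * G)) * h3 + (R * X * E * PR * x ^ c * G - R * X * E) * h4

lemma gamma_moment_integral {k θ : ℝ} (hk : 0 < k) (hθ : 0 < θ) (c : ℕ) :
    Integrable (fun x => x ^ c) (gammaMeasure k (1/θ)) ∧
      ∫ x, x ^ c ∂(gammaMeasure k (1/θ)) = gammaMoment k θ c := by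
  have hr : 0 < 1/θ := by positivity
  have hkc : 0 < k + c := by positivity
  have hmeas : Measurable (gammaPDF k (1/θ)) :=
    (measurable_gammaPDFReal k (1/θ)).ennreal_ofReal
  have hae : ∀ᵐ x : ℝ, x ≠ 0 := by
    have h0 : {a : ℝ | ¬ a ≠ 0} = {0} := by ext x; simp
    rw [ae_iff, h0]
    exact Real.volume_singleton
  have hcongr : (fun x : ℝ => x ^ c * gammaPDFReal k (1/θ) x) =ᵐ[volume]
      fun x => gammaMoment k θ c * gammaPDFReal (k + c) (1/θ) x := by
    filter_upwards [hae] with x hx using pdf_moment_identity hk hθ c hx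
  constructor
  · rw [gammaMeasure, integrable_withDensity_iff hmeas
      (ae_of_all _ fun x => ENNReal.ofReal_lt_top)]
    have h : (fun x : ℝ => x ^ c * (gammaPDF k (1/θ) x).toReal)
        = fun x => x ^ c * gammaPDFReal k (1/θ) x := by
      funext x
      rw [gammaPDF, ENNReal.toReal_ofReal (gammaPDFReal_nonneg hk hr x)]
    rw [h]
    exact ((integrable_gammaPDFReal hkc hr).const_mul _).congr hcongr.symm
  · rw [gammaMeasure]
    have h : gammaPDF k (1/θ) = fun x => (((gammaPDFReal k (1/θ) x).toNNReal : ℝ≥0) : ℝ≥0∞) := by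
      funext x
      rw [gammaPDF, ENNReal.ofReal]
    rw [h, integral_withDensity_eq_integral_smul
      ((measurable_gammaPDFReal k (1/θ)).real_toNNReal) _]
    have h2 : (fun x : ℝ => ((gammaPDFReal k (1/θ) x).toNNReal : ℝ≥0) • x ^ c)
        = fun x => x ^ c * gammaPDFReal k (1/θ) x := by
      funext x
      rw [NNReal.smul_def, smul_eq_mul,
        Real.coe_toNNReal _ (gammaPDFReal_nonneg hk hr x), mul_comm]
    rw [h2, integral_congr_ae hcongr, integral_const_mul,
      integral_gammaPDFReal_eq_one hkc hr, mul_one]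

lemma pow_moment_of_map {Ω : Type*} [MeasurableSpace Ω] {P : Measure Ω}
    {k θ : ℝ} (hk : 0 < k) (hθ : 0 < θ) {X : Ω → ℝ} (hXm : Measurable X)
    (hXd : P.map X = gammaMeasure k (1/θ)) (c : ℕ) :
    Integrable (fun ω => X ω ^ c) P ∧ ∫ ω, X ω ^ c ∂P = gammaMoment k θ c := by
  have h := gamma_moment_integral hk hθ c
  have hg : AEStronglyMeasurable (fun x : ℝ => x ^ c) (P.map X) :=
    (measurable_id.pow_const c).aestronglyMeasurable
  constructor
  · have h1 : Integrable (fun x : ℝ => x ^ c) (P.map X) := by rw [hXd]; exact h.1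
    exact (integrable_map_measure hg hXm.aemeasurable).mp h1
  · calc ∫ ω, X ω ^ c ∂P = ∫ x, x ^ c ∂(P.map X) :=
          (integral_map hXm.aemeasurable hg).symm
      _ = gammaMoment k θ c := by rw [hXd]; exact h.2

lemma card_filter_rank_lt {α : Type*} [LinearOrder α] (B : Finset α) (r : ℕ)
    (hr : r ≤ B.card) :
    (B.filter fun i => (B.filter (· < i)).card < r).card = r := by
  classical
  set φ : α → ℕ := fun i => (B.filter (· < i)).card with hφ
  have hmono : ∀ i ∈ B, ∀ j ∈ B, i < j → φ i < φ j := by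
    intro i hi j hj hij
    apply Finset.card_lt_card
    refine ⟨Finset.monotone_filter_right B (fun x _ hx => lt_trans hx hij), fun hsub => ?_⟩
    have h := hsub (Finset.mem_filter.mpr ⟨hi, hij⟩)
    exact absurd (Finset.mem_filter.mp h).2 (lt_irrefl i)
  have hinj : Set.InjOn φ B := by
    intro i hi j hj hij
    rcases lt_trichotomy i j with h | h | h
    · exact absurd hij (ne_of_lt (hmono i hi j hj h))
    · exact h
    · exact absurd hij.symm (ne_of_lt (hmono j hj i hi h))
  have hlt : ∀ i ∈ B, φ i < B.card := by
    intro i hi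
    apply Finset.card_lt_card
    refine ⟨Finset.filter_subset _ _, fun hsub => ?_⟩
    exact absurd (Finset.mem_filter.mp (hsub hi)).2 (lt_irrefl i)
  have himg : B.image φ = Finset.range B.card := by
    apply Finset.eq_of_subset_of_card_le
    · intro x hx
      obtain ⟨i, hi, rfl⟩ := Finset.mem_image.mp hx
      exact Finset.mem_range.mpr (hlt i hi)
    · rw [Finset.card_range, Finset.card_image_of_injOn hinj]
  have hsubinj : Set.InjOn φ (B.filter fun i => φ i < r) :=
    hinj.mono (by intro x hx; exact (Finset.mem_filter.mp hx).1)
  have hfr : (Finset.range B.card).filter (fun x => x < r) = Finset.range r := by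
    ext x
    simp only [Finset.mem_filter, Finset.mem_range]
    omega
  calc (B.filter fun i => φ i < r).card
      = ((B.filter fun i => φ i < r).image φ).card :=
        (Finset.card_image_of_injOn hsubinj).symm
    _ = ((B.image φ).filter fun x => x < r).card := by
        conv_rhs => rw [Finset.filter_image]
    _ = r := by rw [himg, hfr, Finset.card_range]

lemma prod_vecA {K : ℕ} (n : Fin K → ℕ) (A : Finset (Fin K)) {M : Type*} [CommMonoid M]
    (g : ℕ → M) :
    ∏ i, g (vecA n A i) = (∏ i ∈ A, g (n i)) * ∏ i ∈ Aᶜ, g (n i - 1) := by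
  classical
  have hmaps : ∀ (s : Finset (Fin K)), ∀ i ∈ s, n i ∈ Finset.univ.image n :=
    fun s i _ => Finset.mem_image_of_mem n (Finset.mem_univ i)
  rw [← Finset.prod_fiberwise_of_maps_to (hmaps Finset.univ) (fun i => g (vecA n A i)),
      ← Finset.prod_fiberwise_of_maps_to (hmaps A) (fun i => g (n i)),
      ← Finset.prod_fiberwise_of_maps_to (hmaps Aᶜ) (fun i => g (n i - 1)),
      ← Finset.prod_mul_distrib]
  refine Finset.prod_congr rfl (fun v _ => ?_)
  set B := Finset.univ.filter (fun i : Fin K => n i = v) with hB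
  set r := (A.filter fun i => n i = v).card with hr'
  have hrB : r ≤ B.card := by
    apply Finset.card_le_card
    intro i hi
    exact Finset.mem_filter.mpr ⟨Finset.mem_univ i, (Finset.mem_filter.mp hi).2⟩
  -- left side: within the fiber, rewrite vecA
  have hleft : ∏ i ∈ B, g (vecA n A i)
      = ∏ i ∈ B, (if (B.filter (· < i)).card < r then g v else g (v - 1)) := by
    refine Finset.prod_congr rfl (fun i hi => ?_)
    have hni : n i = v := (Finset.mem_filter.mp hi).2
    have hcond : (Finset.univ.filter (fun j : Fin K => n j = n i ∧ j < i)).card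
        = (B.filter (· < i)).card := by
      rw [hB, Finset.filter_filter]
      congr 1
      ext j
      simp [hni]
    have hcard : (A.filter (fun j => n j = n i)).card = r := by rw [hni, hr']
    rw [vecA, hcond, hcard, hni]
    split_ifs <;> rfl
  have hAfilt : A.filter (fun i => n i = v) = B.filter (· ∈ A) := by
    ext i
    simp only [hB, Finset.mem_filter, Finset.mem_univ, true_and]
    tauto
  have hAcfilt : Aᶜ.filter (fun i => n i = v) = B.filter (· ∉ A) := by
    ext i
    simp only [hB, Finset.mem_filter, Finset.mem_univ, true_and, Finset.mem_compl]
    tauto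
  have hcardc : (Aᶜ.filter (fun i => n i = v)).card = B.card - r := by
    have h := Finset.card_filter_add_card_filter_not (s := B) (p := (· ∈ A))
    have hr2 : r = (B.filter (· ∈ A)).card := by rw [hr', hAfilt]
    rw [hAcfilt]
    omega
  have hright1 : ∏ i ∈ A.filter (fun i => n i = v), g (n i) = g v ^ r := by
    rw [hr']
    rw [Finset.prod_congr rfl (fun i hi => by rw [(Finset.mem_filter.mp hi).2]),
      Finset.prod_const]
  have hright2 : ∏ i ∈ Aᶜ.filter (fun i => n i = v), g (n i - 1) = g (v - 1) ^ (B.card - r) := by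
    rw [Finset.prod_congr rfl (fun i hi => by rw [(Finset.mem_filter.mp hi).2]),
      Finset.prod_const, hcardc]
  rw [hleft, Finset.prod_ite, Finset.prod_const, Finset.prod_const, hright1, hright2,
    card_filter_rank_lt B r hrB]
  congr 2
  have h := Finset.card_filter_add_card_filter_not
    (s := B) (p := fun i => (B.filter (· < i)).card < r)
  rw [card_filter_rank_lt B r hrB] at h
  omega

/-- True evolution equation for the joint moments
`u(t, n⃗) = E[∏_i Z(t,n_i)]` of the strict-weak polymer partition function with
i.i.d. Gamma(k,θ) weights. -/
theorem strictWeak_true_evolution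
    {Ω : Type*} [MeasurableSpace Ω] (P : Measure Ω) [IsProbabilityMeasure P]
    (k θ : ℝ) (hk : 0 < k) (hθ : 0 < θ)
    (Y : ℕ → ℕ → Ω → ℝ)
    (hYmeas : ∀ t n, Measurable (Y t n))
    (hYindep : iIndepFun
      (fun p : ℕ × {m : ℕ // 1 ≤ m} => Y p.1 p.2) P)
    (hYdist : ∀ t n, 1 ≤ n → P.map (Y t n) = gammaMeasure k (1 / θ))
    (Z : ℕ → ℕ → Ω → ℝ)
    (hZ0 : ∀ n ω, Z 0 n ω = if n = 1 then 1 else 0)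
    (hZbot : ∀ t ω, Z t 0 ω = 0)
    (hZrec : ∀ t n ω, Z (t + 1) (n + 1) ω = Y t (n + 1) ω * Z t (n + 1) ω + Z t n ω)
    (K : ℕ) (n : Fin K → ℕ)
    (hmono : ∀ i j : Fin K, i ≤ j → n j ≤ n i) (hpos : ∀ i, 1 ≤ n i)
    (t : ℕ) :
    Integrable (fun ω => ∏ i, Z (t + 1) (n i) ω) P ∧
    ∫ ω, ∏ i, Z (t + 1) (n i) ω ∂P =
      ∑ A : Finset (Fin K),
        (∏ v ∈ Finset.univ.image n,
            gammaMoment k θ ((A.filter (fun i => n i = v)).card)) *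
          ∫ ω, ∏ i, Z t (vecA n A i) ω ∂P := by
  classical
  set ι := ℕ × {m : ℕ // 1 ≤ m} with hι
  set F : ι → MeasurableSpace Ω := fun p => MeasurableSpace.comap (Y p.1 p.2) inferInstance
    with hF
  have hFle : ∀ p, F p ≤ ‹MeasurableSpace Ω› := fun p => (hYmeas p.1 p.2).comap_le
  have hIndepSets : ∀ (S T : Set ι), Disjoint S T →
      Indep (⨆ p ∈ S, F p) (⨆ p ∈ T, F p) P :=
    fun S T h => indep_iSup_of_disjoint hFle hYindep.iIndep h
  have hIndepFun : ∀ (S T : Set ι) (X V : Ω → ℝ), Disjoint S T →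
      Measurable[⨆ p ∈ S, F p] X → Measurable[⨆ p ∈ T, F p] V → IndepFun X V P := by
    intro S T X V h hX hV
    rw [IndepFun_iff_Indep]
    exact indep_of_indep_of_le_left
      (indep_of_indep_of_le_right (hIndepSets S T h) (measurable_iff_comap_le.mp hV))
      (measurable_iff_comap_le.mp hX)
  set G : ℕ → MeasurableSpace Ω := fun s => ⨆ p ∈ {q : ι | q.1 < s}, F p with hG
  set H : ℕ → MeasurableSpace Ω := fun s => ⨆ p ∈ {q : ι | q.1 = s}, F p with hH
  have hdisjHG : ∀ s : ℕ, Disjoint {q : ι | q.1 = s} {q : ι | q.1 < s} := by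
    intro s
    rw [Set.disjoint_left]
    rintro ⟨a, b⟩ h1 h2
    simp only [Set.mem_setOf_eq] at h1 h2
    omega
  have hFH : ∀ (s v : ℕ) (hv : 1 ≤ v), F (s, ⟨v, hv⟩) ≤ H s := by
    intro s v hv
    exact le_biSup F (show (s, ⟨v, hv⟩) ∈ {q : ι | q.1 = s} from rfl)
  have hYH : ∀ (s v : ℕ), 1 ≤ v → Measurable[H s] (Y s v) := by
    intro s v hv
    exact measurable_iff_comap_le.mpr (hFH s v hv)
  -- Z t m is measurable w.r.t. the σ-algebra generated by the weights before time t
  have hZG : ∀ (s : ℕ) (m : ℕ), Measurable[G s] (Z s m) := by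
    intro s
    induction s with
    | zero =>
      intro m
      have h : Z 0 m = fun _ => if m = 1 then (1:ℝ) else 0 := funext (hZ0 m)
      rw [h]
      exact measurable_const
    | succ s ih =>
      have hGle : G s ≤ G (s+1) := by
        apply iSup_le_iSup_of_subset
        intro p hp
        exact Nat.lt_succ_of_lt hp
      intro m
      match m with
      | 0 =>
        have h : Z (s+1) 0 = fun _ => (0:ℝ) := funext (hZbot (s+1))
        rw [h]
        exact measurable_const
      | m+1 =>
        have h : Z (s+1) (m+1) = fun ω => Y s (m+1) ω * Z s (m+1) ω + Z s m ω :=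
          funext (hZrec s m)
        rw [h]
        have hY : Measurable[G (s+1)] (Y s (m+1)) := by
          refine measurable_iff_comap_le.mpr ?_
          exact le_biSup F (show ((s, ⟨m+1, Nat.succ_le_succ (Nat.zero_le m)⟩) : ι)
            ∈ {q : ι | q.1 < s+1} from Nat.lt_succ_self s)
        exact (hY.mul ((ih (m+1)).mono hGle le_rfl)).add ((ih m).mono hGle le_rfl)
  have hZmeas : ∀ (s m : ℕ), Measurable (Z s m) := by
    intro s m
    exact (hZG s m).mono (iSup_le fun p => iSup_le fun _ => hFle p) le_rfl
  -- uniform recursion including m = 0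
  set W : ℕ → ℕ → Ω → ℝ := fun s m => if m = 0 then (fun _ => 0) else Y s m with hW
  have hWdef : ∀ (s m : ℕ) (ω : Ω), Z (s+1) m ω = W s m ω * Z s m ω + Z s (m-1) ω := by
    intro s m ω
    match m with
    | 0 => simp [hW, hZbot]
    | m+1 =>
      rw [hZrec s m ω]
      simp [hW]
  have hWH : ∀ (s m : ℕ), Measurable[H s] (W s m) := by
    intro s m
    match m with
    | 0 => exact measurable_const
    | m+1 => exact hYH s (m+1) (Nat.succ_le_succ (Nat.zero_le m))
  -- moments of single weights
  have hmoment : ∀ (s v : ℕ), 1 ≤ v → ∀ c : ℕ,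
      Integrable (fun ω => Y s v ω ^ c) P ∧ ∫ ω, Y s v ω ^ c ∂P = gammaMoment k θ c :=
    fun s v hv c => pow_moment_of_map hk hθ (hYmeas s v) (hYdist s v hv) c
  -- product of powers of weights at a fixed time over distinct locations
  have yprod : ∀ (s : ℕ) (c : ℕ → ℕ) (S : Finset ℕ), (∀ v ∈ S, 1 ≤ v) →
      Integrable (fun ω => ∏ v ∈ S, Y s v ω ^ c v) P ∧
      ∫ ω, ∏ v ∈ S, Y s v ω ^ c v ∂P = ∏ v ∈ S, gammaMoment k θ (c v) := by
    intro s c S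
    induction S using Finset.induction_on with
    | empty =>
      intro _
      constructor
      · simpa using (integrable_const (1:ℝ))
      · simp
    | @insert a S' ha ih =>
      intro hS
      have ha1 : 1 ≤ a := hS a (Finset.mem_insert_self a S')
      have hX := hmoment s a ha1 (c a)
      have hV := ih (fun v hv => hS v (Finset.mem_insert_of_mem hv))
      have hXm : Measurable[⨆ p ∈ ({(s, ⟨a, ha1⟩)} : Set ι), F p]
          (fun ω => Y s a ω ^ c a) := by
        have h1 : Measurable[F (s, ⟨a, ha1⟩)] (Y s a) := measurable_iff_comap_le.mpr le_rfl
        exact (h1.mono (le_biSup F (Set.mem_singleton _)) le_rfl).pow_const (c a)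
      have hVm : Measurable[⨆ p ∈ {q : ι | q.1 = s ∧ (q.2 : ℕ) ∈ S'}, F p]
          (fun ω => ∏ v ∈ S', Y s v ω ^ c v) := by
        apply Finset.measurable_prod
        intro v hv
        have hv1 : 1 ≤ v := hS v (Finset.mem_insert_of_mem hv)
        have h1 : Measurable[F (s, ⟨v, hv1⟩)] (Y s v) := measurable_iff_comap_le.mpr le_rfl
        exact (h1.mono (le_biSup F (show ((s, ⟨v, hv1⟩) : ι)
          ∈ {q : ι | q.1 = s ∧ (q.2 : ℕ) ∈ S'} from ⟨rfl, hv⟩)) le_rfl).pow_const (c v)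
      have hd : Disjoint ({(s, ⟨a, ha1⟩)} : Set ι) {q : ι | q.1 = s ∧ (q.2 : ℕ) ∈ S'} := by
        rw [Set.disjoint_singleton_left]
        intro h
        exact ha h.2
      have hIF := hIndepFun _ _ _ _ hd hXm hVm
      constructor
      · have h := hIF.integrable_mul hX.1 hV.1
        refine h.congr (ae_of_all _ fun ω => ?_)
        show Y s a ω ^ c a * (∏ v ∈ S', Y s v ω ^ c v) = _
        exact (Finset.prod_insert (f := fun v => Y s v ω ^ c v) ha).symm
      · have heq : (fun ω => ∏ v ∈ insert a S', Y s v ω ^ c v)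
            = fun ω => Y s a ω ^ c a * ∏ v ∈ S', Y s v ω ^ c v := by
          funext ω
          rw [Finset.prod_insert ha]
        have hi := hIF.integral_mul_eq_mul_integral hX.1.aestronglyMeasurable hV.1.aestronglyMeasurable
        rw [Pi.mul_def] at hi
        rw [heq, hi, hX.2, hV.2, Finset.prod_insert ha]
  -- pointwise expansion of the product at time t+1
  have hexp : ∀ (s : ℕ) (K' : ℕ) (f : Fin K' → ℕ) (ω : Ω),
      ∏ i, Z (s+1) (f i) ω =
        ∑ A ∈ (Finset.univ : Finset (Fin K')).powerset,
          (∏ i ∈ A, W s (f i) ω) *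
            ((∏ i ∈ A, Z s (f i) ω) * ∏ i ∈ Finset.univ \ A, Z s (f i - 1) ω) := by
    intro s K' f ω
    calc ∏ i, Z (s+1) (f i) ω
        = ∏ i, (W s (f i) ω * Z s (f i) ω + Z s (f i - 1) ω) :=
          Finset.prod_congr rfl (fun i _ => hWdef s (f i) ω)
      _ = ∑ A ∈ (Finset.univ : Finset (Fin K')).powerset,
            (∏ i ∈ A, W s (f i) ω * Z s (f i) ω) * ∏ i ∈ Finset.univ \ A, Z s (f i - 1) ω :=
          Finset.prod_add _ _ _
      _ = _ := by
          refine Finset.sum_congr rfl (fun A _ => ?_)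
          rw [Finset.prod_mul_distrib, mul_assoc]
  -- integrability of W-products
  have wgroup : ∀ (s : ℕ) (K' : ℕ) (f : Fin K' → ℕ) (A : Finset (Fin K')) (ω : Ω),
      ∏ i ∈ A, W s (f i) ω
        = ∏ v ∈ A.image f, W s v ω ^ (A.filter (fun i => f i = v)).card := by
    intro s K' f A ω
    rw [← Finset.prod_fiberwise_of_maps_to (fun i hi => Finset.mem_image_of_mem f hi)
      (fun i => W s (f i) ω)]
    refine Finset.prod_congr rfl (fun v _ => ?_)
    rw [Finset.prod_congr rfl (fun i hi => by rw [(Finset.mem_filter.mp hi).2]),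
      Finset.prod_const]
  have wint : ∀ (s : ℕ) (K' : ℕ) (f : Fin K' → ℕ) (A : Finset (Fin K')),
      Integrable (fun ω => ∏ i ∈ A, W s (f i) ω) P := by
    intro s K' f A
    by_cases h0 : ∃ i ∈ A, f i = 0
    · obtain ⟨i, hi, hfi⟩ := h0
      have h : (fun ω => ∏ i ∈ A, W s (f i) ω) = fun _ => (0:ℝ) := by
        funext ω
        refine Finset.prod_eq_zero hi ?_
        rw [hfi]
        simp [hW]
      rw [h]
      exact integrable_const 0
    · push_neg at h0
      have hge : ∀ v ∈ A.image f, 1 ≤ v := by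
        intro v hv
        obtain ⟨i, hi, rfl⟩ := Finset.mem_image.mp hv
        exact Nat.one_le_iff_ne_zero.mpr (h0 i hi)
      have h : (fun ω => ∏ i ∈ A, W s (f i) ω)
          = fun ω => ∏ v ∈ A.image f, Y s v ω ^ (A.filter (fun i => f i = v)).card := by
        funext ω
        rw [wgroup s K' f A ω]
        refine Finset.prod_congr rfl (fun v hv => ?_)
        rw [hW]
        simp only [Nat.one_le_iff_ne_zero.mp (hge v hv), if_false]
      rw [h]
      exact (yprod s _ (A.image f) hge).1
  -- master integrability: any joint product of partition functions is integrable
  have master : ∀ (s : ℕ) (K' : ℕ) (f : Fin K' → ℕ),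
      Integrable (fun ω => ∏ i, Z s (f i) ω) P := by
    intro s
    induction s with
    | zero =>
      intro K' f
      have h : (fun ω => ∏ i, Z 0 (f i) ω)
          = fun _ => ∏ i : Fin K', if f i = 1 then (1:ℝ) else 0 :=
        funext fun ω => Finset.prod_congr rfl (fun i _ => hZ0 (f i) ω)
      rw [h]
      exact integrable_const _
    | succ s ih =>
      intro K' f
      have h : (fun ω => ∏ i, Z (s+1) (f i) ω)
          = fun ω => ∑ A ∈ (Finset.univ : Finset (Fin K')).powerset,
              (∏ i ∈ A, W s (f i) ω) *
                ((∏ i ∈ A, Z s (f i) ω) * ∏ i ∈ Finset.univ \ A, Z s (f i - 1) ω) :=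
        funext (hexp s K' f)
      rw [h]
      apply integrable_finset_sum
      intro A _
      have hXm : Measurable[H s] (fun ω => ∏ i ∈ A, W s (f i) ω) :=
        Finset.measurable_prod _ (fun i _ => hWH s (f i))
      have hVm : Measurable[G s] (fun ω =>
          (∏ i ∈ A, Z s (f i) ω) * ∏ i ∈ Finset.univ \ A, Z s (f i - 1) ω) :=
        (Finset.measurable_prod _ (fun i _ => hZG s (f i))).mul
          (Finset.measurable_prod _ (fun i _ => hZG s (f i - 1)))
      have hIF := hIndepFun _ _ _ _ (hdisjHG s) hXm hVm
      refine hIF.integrable_mul (wint s K' f A) ?_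
      -- the Z-part is a product over all coordinates
      have hVeq : (fun ω => (∏ i ∈ A, Z s (f i) ω) * ∏ i ∈ Finset.univ \ A, Z s (f i - 1) ω)
          = fun ω => ∏ i, Z s (if i ∈ A then f i else f i - 1) ω := by
        funext ω
        have h1 : ∀ i : Fin K', Z s (if i ∈ A then f i else f i - 1) ω
            = if i ∈ A then Z s (f i) ω else Z s (f i - 1) ω := by
          intro i
          split_ifs <;> rfl
        rw [Finset.prod_congr rfl (fun i _ => h1 i), Finset.prod_ite,
          Finset.filter_univ_mem, Finset.filter_not, Finset.filter_univ_mem]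
      rw [hVeq]
      exact ih K' _
  -- main computation
  have key : ∀ ω, ∏ i, Z (t+1) (n i) ω
      = ∑ A : Finset (Fin K), (∏ i ∈ A, Y t (n i) ω) * ∏ i, Z t (vecA n A i) ω := by
    intro ω
    rw [hexp t K n ω, Finset.powerset_univ]
    refine Finset.sum_congr rfl (fun A _ => ?_)
    congr 1
    · refine Finset.prod_congr rfl (fun i _ => ?_)
      rw [hW]
      simp only [Nat.one_le_iff_ne_zero.mp (hpos i), if_false]
    · rw [prod_vecA n A (fun m => Z t m ω), Finset.compl_eq_univ_sdiff]
  -- per-subset data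
  have hXgroup : ∀ (A : Finset (Fin K)) (ω : Ω),
      ∏ i ∈ A, Y t (n i) ω
        = ∏ v ∈ Finset.univ.image n, Y t v ω ^ (A.filter (fun i => n i = v)).card := by
    intro A ω
    rw [← Finset.prod_fiberwise_of_maps_to
      (fun i (_ : i ∈ A) => Finset.mem_image_of_mem n (Finset.mem_univ i))
      (fun i => Y t (n i) ω)]
    refine Finset.prod_congr rfl (fun v _ => ?_)
    rw [Finset.prod_congr rfl (fun i hi => by rw [(Finset.mem_filter.mp hi).2]),
      Finset.prod_const]
  have himgpos : ∀ v ∈ Finset.univ.image n, 1 ≤ v := by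
    intro v hv
    obtain ⟨i, _, rfl⟩ := Finset.mem_image.mp hv
    exact hpos i
  have hXint : ∀ A : Finset (Fin K),
      Integrable (fun ω => ∏ i ∈ A, Y t (n i) ω) P ∧
      ∫ ω, ∏ i ∈ A, Y t (n i) ω ∂P
        = ∏ v ∈ Finset.univ.image n, gammaMoment k θ ((A.filter (fun i => n i = v)).card) := by
    intro A
    have h := yprod t (fun v => (A.filter (fun i => n i = v)).card) (Finset.univ.image n)
      himgpos
    have heq : (fun ω => ∏ i ∈ A, Y t (n i) ω)
        = fun ω => ∏ v ∈ Finset.univ.image n,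
            Y t v ω ^ (A.filter (fun i => n i = v)).card := funext (hXgroup A)
    exact ⟨heq ▸ h.1, by rw [heq]; exact h.2⟩
  have hXm : ∀ A : Finset (Fin K), Measurable[H t] (fun ω => ∏ i ∈ A, Y t (n i) ω) :=
    fun A => Finset.measurable_prod _ (fun i _ => hYH t (n i) (hpos i))
  have hVm : ∀ A : Finset (Fin K), Measurable[G t] (fun ω => ∏ i, Z t (vecA n A i) ω) :=
    fun A => Finset.measurable_prod _ (fun i _ => hZG t (vecA n A i))
  have hVint : ∀ A : Finset (Fin K), Integrable (fun ω => ∏ i, Z t (vecA n A i) ω) P :=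
    fun A => master t K (vecA n A)
  have hIF : ∀ A : Finset (Fin K),
      IndepFun (fun ω => ∏ i ∈ A, Y t (n i) ω) (fun ω => ∏ i, Z t (vecA n A i) ω) P :=
    fun A => hIndepFun _ _ _ _ (hdisjHG t) (hXm A) (hVm A)
  have hterm : ∀ A : Finset (Fin K),
      Integrable (fun ω => (∏ i ∈ A, Y t (n i) ω) * ∏ i, Z t (vecA n A i) ω) P :=
    fun A => (hIF A).integrable_mul (hXint A).1 (hVint A)
  have hkey : (fun ω => ∏ i, Z (t+1) (n i) ω)
      = fun ω => ∑ A : Finset (Fin K),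
          (∏ i ∈ A, Y t (n i) ω) * ∏ i, Z t (vecA n A i) ω := funext key
  constructor
  · rw [hkey]
    exact integrable_finset_sum _ (fun A _ => hterm A)
  · rw [hkey, integral_finset_sum _ (fun A _ => hterm A)]
    refine Finset.sum_congr rfl (fun A _ => ?_)
    have hi := (hIF A).integral_mul_eq_mul_integral (hXint A).1.aestronglyMeasurable (hVint A).aestronglyMeasurable
    rw [Pi.mul_def] at hi
    rw [hi, (hXint A).2]
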